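/- Let v_max > 0, ω* ∈ (0, v_max/R_out), Θ ∈ (0, π/2) with cos(Θ) > R_out ω*/v_max, A > 0, and 0 < R_in < R_out. For r ∈ (R_in, R_out), s ∈ (−Θ, Θ), and H ≥ A(1/(cos(s) − cos(Θ)) − 1/(1 − cos(Θ))), one has 1/(v_max cos(s) − r ω*) ≤ (A + (1 − cos(Θ)) H)/(A (v_max − R_out ω*) + (v_max cos(Θ) − R_out ω*)(1 − cos(Θ)) H). -/

import Mathlib

open Set Real

/-- Inequality (6.17): bound on the singular factor `1/(v_max cos s − r ω*)` in terms of
the penalty term of the Control Lyapunov Function. -/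
theorem stmt_9 (vmax Rin Rout ω Θ A : ℝ)
    (hvmax : 0 < vmax) (hRin : 0 < Rin) (hR : Rin < Rout)
    (hω : ω ∈ Ioo 0 (vmax / Rout))
    (hΘ : Θ ∈ Ioo 0 (π / 2)) (hcos : Real.cos Θ > Rout * ω / vmax) (hA : 0 < A) :
    ∀ r ∈ Ioo Rin Rout, ∀ s ∈ Ioo (-Θ) Θ, ∀ H : ℝ,
      A * (1 / (Real.cos s - Real.cos Θ) - 1 / (1 - Real.cos Θ)) ≤ H →
      1 / (vmax * Real.cos s - r * ω) ≤
        (A + (1 - Real.cos Θ) * H) /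
          (A * (vmax - Rout * ω) + (vmax * Real.cos Θ - Rout * ω) * (1 - Real.cos Θ) * H) := by
  rintro r ⟨hr1, hr2⟩ s ⟨hs1, hs2⟩ H hH
  obtain ⟨hω0, hω1⟩ := hω
  obtain ⟨hΘ0, hΘ1⟩ := hΘ
  set c := Real.cos s with hc
  set C := Real.cos Θ with hC
  have habs : |s| < Θ := abs_lt.mpr ⟨hs1, hs2⟩
  have hcC : C < c := by
    have := Real.cos_lt_cos_of_nonneg_of_le_pi (abs_nonneg s)
      (le_trans hΘ1.le (by linarith [Real.pi_pos])) habs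
    rwa [Real.cos_abs] at this
  have hc1 : c ≤ 1 := Real.cos_le_one s
  have hC1 : C < 1 := by
    have := Real.cos_lt_cos_of_nonneg_of_le_pi le_rfl
      (le_trans hΘ1.le (by linarith [Real.pi_pos])) hΘ0
    simpa using this
  have hRout : 0 < Rout := lt_trans hRin hR
  have hvCω : Rout * ω < vmax * C := by
    rw [gt_iff_lt, div_lt_iff₀ hvmax] at hcos
    linarith
  have hx : 0 < vmax * c - r * ω := by
    have : r * ω < Rout * ω := by nlinarith
    nlinarith
  -- H ≥ 0
  have hcCpos : 0 < c - C := by linarith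
  have hC1pos : 0 < 1 - C := by linarith
  have hHkey : A * (1 - c) ≤ H * ((c - C) * (1 - C)) := by
    have h1 : A * (1 / (c - C) - 1 / (1 - C)) = A * (1 - c) / ((c - C) * (1 - C)) := by
      field_simp
      ring
    rw [h1] at hH
    rw [div_le_iff₀ (by positivity)] at hH
    linarith
  have hH0 : 0 ≤ H := by nlinarith [mul_pos hcCpos hC1pos, mul_nonneg hA.le (sub_nonneg.mpr hc1)]
  have hD : 0 < A * (vmax - Rout * ω) + (vmax * C - Rout * ω) * (1 - C) * H := by
    have h1 : 0 < vmax - Rout * ω := by nlinarith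
    have h2 : 0 < vmax * C - Rout * ω := by linarith
    positivity
  rw [div_le_div_iff₀ hx hD]
  nlinarith [mul_nonneg (mul_nonneg hH0 hC1pos.le) (mul_pos hω0 (by linarith : (0:ℝ) < Rout - r)).le,
    mul_pos hω0 (show (0:ℝ) < Rout - r by linarith),
    mul_nonneg (mul_nonneg hA.le (sub_nonneg.mpr hc1)) (mul_pos hω0 (show (0:ℝ) < Rout - r by linarith)).le,
    mul_le_mul_of_nonneg_left hHkey hvmax.le, hHkey]
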